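/- Suppose a sequence (P(j))_{j∈ℤ} of integers satisfies P(ν) − m·P(ν+r) + C(m,2)·P(ν+2r) − ... + (−1)^m·P(ν+mr) ≡ 0 (mod r) for some ν, with each |P(ν+lr)| ≤ 1 for 0 ≤ l ≤ m, and 2^m < r. If P(ν+lr) = 1 for all even l with 0 ≤ l ≤ m, then P(ν+lr) = 1 for all odd l with 0 ≤ l ≤ m as well. -/
import Mathlib


open Finset

theorem odd_terms_equal_one (m r : ℕ) (hm : 1 ≤ m) (hr : 2 ^ m < r)
    (P : ℤ → ℤ) (ν : ℤ)
    (hcong : (r : ℤ) ∣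
      ∑ l ∈ Finset.range (m + 1), (-1 : ℤ) ^ l * (m.choose l : ℤ) * P (ν + l * r))
    (hbound : ∀ l ≤ m, |P (ν + l * r)| ≤ 1)
    (heven : ∀ l ≤ m, Even l → P (ν + l * r) = 1) :
    ∀ l ≤ m, Odd l → P (ν + l * r) = 1 := by
  set S := ∑ l ∈ Finset.range (m + 1), (-1 : ℤ) ^ l * (m.choose l : ℤ) * P (ν + l * r) with hS
  have habs : |S| ≤ 2 ^ m := by
    calc |S| ≤ ∑ l ∈ Finset.range (m + 1), |(-1 : ℤ) ^ l * (m.choose l : ℤ) * P (ν + l * r)| :=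
          Finset.abs_sum_le_sum_abs _ _
      _ ≤ ∑ l ∈ Finset.range (m + 1), (m.choose l : ℤ) := by
          apply Finset.sum_le_sum
          intro l hl
          rw [abs_mul, abs_mul, abs_pow, abs_neg, abs_one, one_pow, one_mul, Int.abs_natCast]
          have hb := hbound l (Nat.lt_succ_iff.mp (Finset.mem_range.mp hl))
          nlinarith [Int.natCast_nonneg (m.choose l)]
      _ = 2 ^ m := by
          norm_cast
          exact Nat.sum_range_choose m
  have hS0 : S = 0 :=
    Int.eq_zero_of_abs_lt_dvd hcong (lt_of_le_of_lt habs (by exact_mod_cast hr))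
  have halt : ∑ l ∈ Finset.range (m + 1), (-1 : ℤ) ^ l * (m.choose l : ℤ) = 0 := by
    rw [Int.alternating_sum_range_choose]
    simp [Nat.one_le_iff_ne_zero.mp hm]
  have hsum : ∑ l ∈ Finset.range (m + 1),
      (-1 : ℤ) ^ l * (m.choose l : ℤ) * (P (ν + l * r) - 1) = 0 := by
    simp only [mul_sub, mul_one, Finset.sum_sub_distrib]
    rw [← hS, hS0, halt, sub_zero]
  have hnonneg : ∀ l ∈ Finset.range (m + 1),
      0 ≤ (-1 : ℤ) ^ l * (m.choose l : ℤ) * (P (ν + l * r) - 1) := by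
    intro l hl
    have hlm := Nat.lt_succ_iff.mp (Finset.mem_range.mp hl)
    rcases Nat.even_or_odd l with he | ho
    · rw [heven l hlm he]
      simp
    · rw [Odd.neg_one_pow ho]
      have hb := hbound l hlm
      have := abs_le.mp hb
      nlinarith [Int.natCast_nonneg (m.choose l)]
  have hzero := (Finset.sum_eq_zero_iff_of_nonneg hnonneg).mp hsum
  intro l hlm ho
  have hz := hzero l (Finset.mem_range.mpr (Nat.lt_succ_of_le hlm))
  rw [Odd.neg_one_pow ho] at hz
  have hc : 0 < (m.choose l : ℤ) := by
    exact_mod_cast Nat.choose_pos hlm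
  have : P (ν + l * r) - 1 = 0 := by
    rcases mul_eq_zero.mp hz with h | h
    · rcases mul_eq_zero.mp h with h' | h' <;> [norm_num at h'; exact absurd h' hc.ne']
    · exact h
  linarith
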